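/- arXiv:2502.07585 — 3 statements merged into one kernel-verified Lean document; each statement's English description precedes it below -/
import Mathlib

section
/- Consider a game with agents N and action sets A_i, with all utilities i.i.d. with continuous CDF F. For a fixed action profile a, the probability that a is a pure ε*-equilibrium (a pure ε-equilibrium in which all agents except at most one play a best response) equals (1/∏_{i∈N}|A_i|) · (1 + ∑_{i∈N} |A_i| p_i(ε)), where p_i(ε) = ∫ (F(x+ε)^{|A_i|−1} − F(x)^{|A_i|−1}) dF(x). -/
open MeasureTheory

section Helpers
open MeasureTheory Set ENNReal

variable {ι : Type*} [Fintype ι] [DecidableEq ι] (μ : Measure ℝ) [IsProbabilityMeasure μ]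

noncomputable def condEquiv (k₀ : ι) : (ι → ℝ) ≃ᵐ ℝ × ({k : ι // ¬ k = k₀} → ℝ) :=
  (MeasurableEquiv.piEquivPiSubtypeProd (fun _ : ι => ℝ) (fun k => k = k₀)).trans
    ((MeasurableEquiv.funUnique {k : ι // k = k₀} ℝ).prodCongr (MeasurableEquiv.refl _))

lemma condEquiv_apply (k₀ : ι) (f : ι → ℝ) :
    condEquiv k₀ f = (f k₀, fun k : {k : ι // ¬ k = k₀} => f ↑k) := rfl

lemma pi_cond (k₀ : ι) (s : Set (ℝ × ({k : ι // ¬ k = k₀} → ℝ))) (hs : MeasurableSet s) :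
    Measure.pi (fun _ : ι => μ) (condEquiv k₀ ⁻¹' s)
      = ∫⁻ t, Measure.pi (fun _ : {k : ι // ¬ k = k₀} => μ) (Prod.mk t ⁻¹' s) ∂μ := by
  have h1 := measurePreserving_piEquivPiSubtypeProd (fun _ : ι => μ) (fun k => k = k₀)
  have h2 : MeasurePreserving
      ((MeasurableEquiv.funUnique {k : ι // k = k₀} ℝ).prodCongr (MeasurableEquiv.refl _))
      ((Measure.pi fun _ : {k : ι // k = k₀} => μ).prod
        (Measure.pi fun _ : {k : ι // ¬ k = k₀} => μ))
      (μ.prod (Measure.pi fun _ : {k : ι // ¬ k = k₀} => μ)) :=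
    (measurePreserving_funUnique μ _).prod (MeasurePreserving.id _)
  have h : MeasurePreserving (condEquiv k₀) (Measure.pi fun _ : ι => μ)
      (μ.prod (Measure.pi fun _ : {k : ι // ¬ k = k₀} => μ)) := by
    have e : (Subtype.fintype fun k : ι => k = k₀) = Fintype.subtypeEq k₀ :=
      Subsingleton.elim _ _
    rw [e] at h1
    exact h2.comp h1
  rw [h.measure_preimage hs.nullMeasurableSet, Measure.prod_apply hs]

lemma measure_le_shift (k₀ : ι) (S : Finset ι) (hk₀ : k₀ ∉ S) (δ : ℝ) :
    Measure.pi (fun _ : ι => μ) {f : ι → ℝ | ∀ k ∈ S, f k ≤ f k₀ + δ}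
      = ∫⁻ t, (μ (Iic (t + δ))) ^ S.card ∂μ := by
  set s : Set (ℝ × ({k : ι // ¬ k = k₀} → ℝ)) :=
    {p | ∀ k : {k : ι // ¬ k = k₀}, ↑k ∈ S → p.2 k ≤ p.1 + δ} with hsdef
  have hs : MeasurableSet s := by
    have : s = ⋂ (k : {k : ι // ¬ k = k₀}) (_ : ↑k ∈ S),
        {p : ℝ × ({k : ι // ¬ k = k₀} → ℝ) | p.2 k ≤ p.1 + δ} := by
      ext p; simp [hsdef]
    rw [this]
    exact MeasurableSet.iInter fun k => MeasurableSet.iInter fun _ =>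
      measurableSet_le (measurable_snd.eval)
        (measurable_fst.add_const δ)
  have hpre : condEquiv k₀ ⁻¹' s = {f : ι → ℝ | ∀ k ∈ S, f k ≤ f k₀ + δ} := by
    ext f
    simp only [mem_preimage, condEquiv_apply, hsdef, mem_setOf_eq, Subtype.forall]
    constructor
    · intro h k hk
      exact h k (fun he => hk₀ (he ▸ hk)) hk
    · intro h k _ hk
      exact h k hk
  rw [← hpre, pi_cond μ k₀ s hs]
  refine lintegral_congr fun t => ?_
  have hsec : Prod.mk t ⁻¹' s
      = Set.pi univ (fun k : {k : ι // ¬ k = k₀} =>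
          if ↑k ∈ S then Iic (t + δ) else univ) := by
    ext g
    simp only [mem_preimage, hsdef, mem_setOf_eq, Set.mem_pi, mem_univ, forall_true_left]
    constructor
    · intro h k
      by_cases hk : ↑k ∈ S
      · simpa [hk] using h k hk
      · simp [hk]
    · intro h k hk
      have := h k
      simpa [hk] using this
  rw [hsec, Measure.pi_pi]
  have : ∀ k : {k : ι // ¬ k = k₀},
      μ (if ↑k ∈ S then Iic (t + δ) else univ)
        = if ↑k ∈ S then μ (Iic (t + δ)) else 1 := by
    intro k; split <;> simp
  rw [Finset.prod_congr rfl fun k _ => this k, Finset.prod_ite, Finset.prod_const,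
    Finset.prod_const, one_pow, mul_one]
  congr 1
  refine Finset.card_bij (fun k _ => (k : ι)) ?_ ?_ ?_
  · intro k hk; simpa using (Finset.mem_filter.mp hk).2
  · intro k _ k' _ h; exact Subtype.ext h
  · intro b hb
    exact ⟨⟨b, fun he => hk₀ (he ▸ hb)⟩, by simpa using hb, rfl⟩

lemma measure_eq_coord_null [NullSingletonClass μ] (k₀ k₁ : ι) (hk : ¬ k₁ = k₀) :
    Measure.pi (fun _ : ι => μ) {f : ι → ℝ | f k₁ = f k₀} = 0 := by
  set s : Set (ℝ × ({k : ι // ¬ k = k₀} → ℝ)) := {p | p.2 ⟨k₁, hk⟩ = p.1} with hsdef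
  have hs : MeasurableSet s :=
    measurableSet_eq_fun (measurable_snd.eval) measurable_fst
  have hpre : condEquiv k₀ ⁻¹' s = {f : ι → ℝ | f k₁ = f k₀} := by
    ext f; simp [condEquiv_apply, hsdef]
  rw [← hpre, pi_cond μ k₀ s hs]
  have hsec : ∀ t : ℝ,
      (Measure.pi fun _ : {k : ι // ¬ k = k₀} => μ) (Prod.mk t ⁻¹' s) = 0 := by
    intro t
    have : Prod.mk t ⁻¹' s
        = Set.pi univ (fun k : {k : ι // ¬ k = k₀} =>
            if k = ⟨k₁, hk⟩ then ({t} : Set ℝ) else univ) := by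
      ext g
      simp only [mem_preimage, hsdef, mem_setOf_eq, Set.mem_pi, mem_univ, forall_true_left]
      constructor
      · intro hg k
        by_cases h : k = ⟨k₁, hk⟩
        · subst h; simp [hg]
        · simp [h]
      · intro hg
        have := hg ⟨k₁, hk⟩
        simpa using this
    rw [this, Measure.pi_pi]
    refine Finset.prod_eq_zero (Finset.mem_univ ⟨k₁, hk⟩) ?_
    simp [measure_singleton]
  simp [hsec]

lemma mul_lintegral_pow [NullSingletonClass μ] (m : ℕ) :
    ((m : ℝ≥0∞) + 1) * ∫⁻ t, (μ (Iic t)) ^ m ∂μ = 1 := by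
  classical
  set P := Measure.pi (fun _ : Fin (m + 1) => μ) with hP
  set E : Fin (m + 1) → Set (Fin (m + 1) → ℝ) := fun k => {f | ∀ j, f j ≤ f k} with hE
  have hEm : ∀ k, MeasurableSet (E k) := by
    intro k
    have : E k = ⋂ j, {f : Fin (m + 1) → ℝ | f j ≤ f k} := by ext f; simp [hE]
    rw [this]
    exact MeasurableSet.iInter fun j =>
      measurableSet_le (measurable_pi_apply j) (measurable_pi_apply k)
  have hunion : ⋃ k, E k = univ := by
    ext f
    simp only [mem_iUnion, mem_univ, iff_true]
    obtain ⟨k, -, hk⟩ := Finset.exists_max_image Finset.univ f ⟨0, Finset.mem_univ _⟩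
    exact ⟨k, fun j => hk j (Finset.mem_univ _)⟩
  have hdisj : Pairwise (Function.onFun (AEDisjoint P) E) := by
    intro k k' hkk'
    refine measure_mono_null ?_ (measure_eq_coord_null μ k k' fun h => hkk' h.symm)
    rintro f ⟨h1, h2⟩
    exact le_antisymm (h1 k') (h2 k)
  have hval : ∀ k, P (E k) = ∫⁻ t, (μ (Iic t)) ^ m ∂μ := by
    intro k
    have he : E k = {f : Fin (m + 1) → ℝ | ∀ j ∈ Finset.univ.erase k, f j ≤ f k + 0} := by
      ext f
      simp only [hE, mem_setOf_eq, add_zero, Finset.mem_erase, Finset.mem_univ, and_true]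
      exact ⟨fun h j _ => h j, fun h j => by
        by_cases hj : j = k
        · subst hj; exact le_rfl
        · exact h j hj⟩
    rw [he, measure_le_shift μ k _ (by simp) 0]
    simp [Finset.card_erase_of_mem, Finset.card_univ]
  have h1 : P univ = 1 := measure_univ
  rw [← hunion, measure_iUnion₀ hdisj (fun k => (hEm k).nullMeasurableSet)] at h1
  rw [tsum_fintype] at h1
  simp only [hval, Finset.sum_const, Finset.card_univ, Fintype.card_fin, nsmul_eq_mul] at h1
  have hc : ((m : ℝ≥0∞) + 1) = ((m + 1 : ℕ) : ℝ≥0∞) := by push_cast; ring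
  rw [hc, h1]

end Helpers

open Set ENNReal

/-- `p_i(ε) = ∫ (F(x+ε)^(|A_i|−1) − F(x)^(|A_i|−1)) dF(x)` where
`F x = μ (Iic x)`. -/
noncomputable def pEps (μ : Measure ℝ) (ε : ℝ) (card : ℕ) : ℝ :=
  ∫ x, (((μ (Set.Iic (x + ε))).toReal) ^ (card - 1)
      - ((μ (Set.Iic x)).toReal) ^ (card - 1)) ∂μ

/-- With all utilities i.i.d. with continuous CDF, a fixed action profile `a`
is a pure ε*-equilibrium (a pure ε-equilibrium in which all agents except at
most one best-respond) with probability
`(1/∏_i |A_i|) · (1 + ∑_i |A_i| p_i(ε))`. -/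
theorem stmt_6 (μ : Measure ℝ) [IsProbabilityMeasure μ] [NullSingletonClass μ]
    (ε : ℝ) (hε : 0 ≤ ε)
    (N : Type) [Fintype N] [DecidableEq N] [Nonempty N]
    (A : N → Type) [∀ i, Fintype (A i)] (hA : ∀ i, 2 ≤ Fintype.card (A i))
    (a : ∀ i, A i) :
    ((Measure.pi (fun _ : N => Measure.pi (fun _ : ∀ j, A j => μ)))
      {u : N → (∀ j, A j) → ℝ |
        ∃ i : N, (∀ x : A i, u i (Function.update a i x) ≤ u i a + ε) ∧
          ∀ j : N, j ≠ i → ∀ x : A j, u j (Function.update a j x) ≤ u j a}).toReal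
      = (1 / ∏ i : N, (Fintype.card (A i) : ℝ)) *
        (1 + ∑ i : N, (Fintype.card (A i) : ℝ) * pEps μ ε (Fintype.card (A i))) := by
  classical
  set n : N → ℕ := fun i => Fintype.card (A i) with hn
  set μπ : Measure ((∀ j, A j) → ℝ) := Measure.pi (fun _ : ∀ j, A j => μ) with hμπ
  set Bs : ∀ i : N, Set ((∀ j, A j) → ℝ) :=
    fun i => {f | ∀ x : A i, f (Function.update a i x) ≤ f a} with hBs
  set Cs : ∀ i : N, Set ((∀ j, A j) → ℝ) :=
    fun i => {f | ∀ x : A i, f (Function.update a i x) ≤ f a + ε} with hCs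
  have hBmeas : ∀ i, MeasurableSet (Bs i) := by
    intro i
    have : Bs i = ⋂ x : A i, {f : (∀ j, A j) → ℝ | f (Function.update a i x) ≤ f a} := by
      ext f; simp [hBs]
    rw [this]
    exact MeasurableSet.iInter fun x =>
      measurableSet_le (measurable_pi_apply _) (measurable_pi_apply _)
  have hCmeas : ∀ i, MeasurableSet (Cs i) := by
    intro i
    have : Cs i = ⋂ x : A i, {f : (∀ j, A j) → ℝ | f (Function.update a i x) ≤ f a + ε} := by
      ext f; simp [hCs]
    rw [this]
    exact MeasurableSet.iInter fun x =>
      measurableSet_le (measurable_pi_apply _) ((measurable_add_const ε).comp (measurable_pi_apply a))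
  have hBC : ∀ i, Bs i ⊆ Cs i := by
    intro i f hf x
    exact le_trans (hf x) (le_add_of_nonneg_right hε)
  -- the one-agent computation
  set b : N → ℝ≥0∞ := fun i => ∫⁻ t, (μ (Iic t)) ^ (n i - 1) ∂μ with hb
  set c : N → ℝ≥0∞ := fun i => ∫⁻ t, (μ (Iic (t + ε))) ^ (n i - 1) ∂μ with hc
  have key : ∀ (i : N) (δ : ℝ), 0 ≤ δ →
      μπ {f : (∀ j, A j) → ℝ | ∀ x : A i, f (Function.update a i x) ≤ f a + δ}
        = ∫⁻ t, (μ (Iic (t + δ))) ^ (n i - 1) ∂μ := by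
    intro i δ hδ
    set S : Finset (∀ j, A j) :=
      Finset.image (fun x => Function.update a i x) (Finset.univ.erase (a i)) with hS
    have haS : a ∉ S := by
      intro h
      rcases Finset.mem_image.mp h with ⟨x, hx, hxa⟩
      have : x = a i := by
        have := congrFun hxa i
        simpa [Function.update_self] using this
      exact (Finset.mem_erase.mp hx).1 this
    have hScard : S.card = n i - 1 := by
      rw [hS, Finset.card_image_of_injOn, Finset.card_erase_of_mem (Finset.mem_univ _),
        Finset.card_univ]
      intro x _ y _ hxy
      have := congrFun hxy i
      simpa [Function.update_self] using this
    have hseteq : {f : (∀ j, A j) → ℝ | ∀ x : A i, f (Function.update a i x) ≤ f a + δ}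
        = {f : (∀ j, A j) → ℝ | ∀ k ∈ S, f k ≤ f a + δ} := by
      ext f
      simp only [mem_setOf_eq]
      constructor
      · intro h k hk
        rcases Finset.mem_image.mp hk with ⟨x, _, rfl⟩
        exact h x
      · intro h x
        by_cases hx : x = a i
        · subst hx
          rw [Function.update_eq_self]
          exact le_add_of_nonneg_right hδ
        · exact h _ (Finset.mem_image.mpr
            ⟨x, Finset.mem_erase.mpr ⟨hx, Finset.mem_univ _⟩, rfl⟩)
    rw [hseteq, hμπ, measure_le_shift μ a S haS δ, hScard]
  have hBval : ∀ i, μπ (Bs i) = b i := by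
    intro i
    have h0 : Bs i = {f : (∀ j, A j) → ℝ | ∀ x : A i, f (Function.update a i x) ≤ f a + 0} := by
      ext f; simp [hBs]
    rw [h0, key i 0 le_rfl]
    exact lintegral_congr fun t => by rw [add_zero]
  have hCval : ∀ i, μπ (Cs i) = c i := fun i => key i ε hε
  have hbinv : ∀ i, b i = ((n i : ℝ≥0∞))⁻¹ := by
    intro i
    have h1 := mul_lintegral_pow μ (n i - 1)
    have hcast : ((n i - 1 : ℕ) : ℝ≥0∞) + 1 = (n i : ℝ≥0∞) := by
      have h2 : 1 ≤ n i := le_trans one_le_two (hA i)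
      exact_mod_cast congrArg (Nat.cast : ℕ → ℝ≥0∞) (Nat.sub_add_cancel h2)
    rw [hcast] at h1
    have hn0 : (n i : ℝ≥0∞) ≠ 0 := by
      have h2 : 0 < n i := lt_of_lt_of_le two_pos (hA i)
      exact_mod_cast Nat.cast_ne_zero.mpr h2.ne'
    have : ((n i : ℝ≥0∞))⁻¹ * ((n i : ℝ≥0∞) * b i) = b i := by
      rw [← mul_assoc, ENNReal.inv_mul_cancel hn0 (ENNReal.natCast_ne_top _), one_mul]
    rw [← this, h1, mul_one]
  -- the product space decomposition
  set P : Measure (N → (∀ j, A j) → ℝ) := Measure.pi (fun _ : N => μπ) with hPdef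
  set D : ∀ i : N, Set ((∀ j, A j) → ℝ) := fun i => Cs i \ Bs i with hD
  set T : Set (N → (∀ j, A j) → ℝ) := Set.pi univ Bs with hT
  set U : N → Set (N → (∀ j, A j) → ℝ) :=
    fun i => Set.pi univ (Function.update Bs i (D i)) with hU
  have hUmem : ∀ (i : N) (u : N → (∀ j, A j) → ℝ),
      u ∈ U i ↔ (u i ∈ D i ∧ ∀ j, j ≠ i → u j ∈ Bs j) := by
    intro i u
    constructor
    · intro h
      refine ⟨by simpa using h i (mem_univ i), fun j hj => ?_⟩
      have := h j (mem_univ j)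
      rwa [Function.update_apply, if_neg hj] at this
    · rintro ⟨h1, h2⟩ j -
      rw [Function.update_apply]
      split
      · next hji => subst hji; exact h1
      · next hji => exact h2 j hji
  have hSeq : {u : N → (∀ j, A j) → ℝ |
        ∃ i : N, (∀ x : A i, u i (Function.update a i x) ≤ u i a + ε) ∧
          ∀ j : N, j ≠ i → ∀ x : A j, u j (Function.update a j x) ≤ u j a}
      = T ∪ ⋃ i, U i := by
    ext u
    simp only [mem_setOf_eq, mem_union, mem_iUnion]
    constructor
    · rintro ⟨i, h1, h2⟩
      by_cases hbi : u i ∈ Bs i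
      · left
        intro j _
        by_cases hj : j = i
        · subst hj; exact hbi
        · exact h2 j hj
      · right
        exact ⟨i, (hUmem i u).mpr ⟨⟨h1, hbi⟩, fun j hj => h2 j hj⟩⟩
    · rintro (hT' | ⟨i, hi⟩)
      · refine ⟨Classical.arbitrary N, hBC _ (hT' _ (mem_univ _)), fun j _ => ?_⟩
        exact hT' j (mem_univ j)
      · rcases (hUmem i u).mp hi with ⟨h1, h2⟩
        exact ⟨i, h1.1, fun j hj => h2 j hj⟩
  have hTmeas : MeasurableSet T := MeasurableSet.univ_pi fun i => hBmeas i
  have hUmeas : ∀ i, MeasurableSet (U i) := by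
    intro i
    refine MeasurableSet.univ_pi fun j => ?_
    rw [Function.update_apply]
    split
    · exact (hCmeas _).diff (hBmeas _)
    · exact hBmeas j
  have hTU : Disjoint T (⋃ i, U i) := by
    rw [Set.disjoint_left]
    rintro u hu hu'
    rcases mem_iUnion.mp hu' with ⟨i, hi⟩
    exact ((hUmem i u).mp hi).1.2 (hu i (mem_univ i))
  have hUU : Pairwise (Function.onFun Disjoint U) := by
    intro i j hij
    rw [Function.onFun, Set.disjoint_left]
    intro u hu hu'
    exact ((hUmem j u).mp hu').1.2 (((hUmem i u).mp hu).2 j (Ne.symm hij))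
  have hmeasS : P (T ∪ ⋃ i, U i) = P T + ∑ i, P (U i) := by
    rw [measure_union hTU (MeasurableSet.iUnion hUmeas),
      measure_iUnion hUU hUmeas, tsum_fintype]
  have hPT : P T = ∏ j, b j := by
    rw [hT, hPdef, Measure.pi_pi]
    exact Finset.prod_congr rfl fun j _ => hBval j
  have hDval : ∀ i, μπ (D i) = c i - b i := by
    intro i
    rw [hD]
    simp only
    rw [measure_diff (hBC i) (hBmeas i).nullMeasurableSet (measure_ne_top _ _),
      hBval, hCval]
  have hPU : ∀ i, P (U i) = (c i - b i) * ∏ j ∈ Finset.univ.erase i, b j := by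
    intro i
    rw [hU, hPdef, Measure.pi_pi]
    have hup : ∀ j, μπ (Function.update Bs i (D i) j)
        = Function.update (fun j => μπ (Bs j)) i (μπ (D i)) j := by
      intro j
      rw [Function.update_apply, Function.update_apply, apply_ite μπ]
    rw [Finset.prod_congr rfl fun j _ => hup j,
      Finset.prod_update_of_mem (Finset.mem_univ i), hDval i,
      Finset.sdiff_singleton_eq_erase]
    congr 1
    exact Finset.prod_congr rfl fun j _ => hBval j
  -- finiteness and comparisons
  have hbne : ∀ i, b i ≠ ⊤ := fun i => by rw [← hBval i]; exact measure_ne_top _ _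
  have hcne : ∀ i, c i ≠ ⊤ := fun i => by rw [← hCval i]; exact measure_ne_top _ _
  have hble : ∀ i, b i ≤ c i := fun i => by
    rw [← hBval i, ← hCval i]; exact measure_mono (hBC i)
  -- real-valued integrals
  have hFmeas : Measurable (fun t : ℝ => μ (Iic t)) :=
    Monotone.measurable (fun s t hst => measure_mono (Iic_subset_Iic.mpr hst))
  have hGmeas : ∀ i, Measurable (fun t : ℝ => (μ (Iic (t + ε))) ^ (n i - 1)) :=
    fun i => ((hFmeas.comp (measurable_add_const ε)).pow_const _)
  have hHmeas : ∀ i, Measurable (fun t : ℝ => (μ (Iic t)) ^ (n i - 1)) :=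
    fun i => hFmeas.pow_const _
  have hcReal : ∀ i, ∫ x, ((μ (Iic (x + ε))).toReal) ^ (n i - 1) ∂μ = (c i).toReal := by
    intro i
    rw [hc]
    rw [← integral_toReal (hGmeas i).aemeasurable
      (ae_of_all _ fun x => ENNReal.pow_lt_top (measure_lt_top μ _))]
    exact integral_congr_ae (ae_of_all _ fun x => (ENNReal.toReal_pow _ _).symm)
  have hbReal : ∀ i, ∫ x, ((μ (Iic x)).toReal) ^ (n i - 1) ∂μ = (b i).toReal := by
    intro i
    rw [hb]
    rw [← integral_toReal (hHmeas i).aemeasurable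
      (ae_of_all _ fun x => ENNReal.pow_lt_top (measure_lt_top μ _))]
    exact integral_congr_ae (ae_of_all _ fun x => (ENNReal.toReal_pow _ _).symm)
  have hintG : ∀ i, Integrable (fun x => ((μ (Iic (x + ε))).toReal) ^ (n i - 1)) μ := by
    intro i
    have he : (fun x => ((μ (Iic (x + ε))).toReal) ^ (n i - 1))
        = fun x => ((μ (Iic (x + ε)) ^ (n i - 1)).toReal) := by
      funext x; rw [ENNReal.toReal_pow]
    rw [he]
    exact integrable_toReal_of_lintegral_ne_top (hGmeas i).aemeasurable (hcne i)
  have hintH : ∀ i, Integrable (fun x => ((μ (Iic x)).toReal) ^ (n i - 1)) μ := by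
    intro i
    have he : (fun x => ((μ (Iic x)).toReal) ^ (n i - 1))
        = fun x => ((μ (Iic x) ^ (n i - 1)).toReal) := by
      funext x; rw [ENNReal.toReal_pow]
    rw [he]
    exact integrable_toReal_of_lintegral_ne_top (hHmeas i).aemeasurable (hbne i)
  have hpEps : ∀ i, pEps μ ε (n i) = (c i).toReal - (b i).toReal := by
    intro i
    rw [pEps, integral_sub (hintG i) (hintH i), hcReal, hbReal]
  have hbtoReal : ∀ i, (b i).toReal = ((n i : ℝ))⁻¹ := by
    intro i
    rw [hbinv i]
    simp
  -- put everything together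
  rw [hSeq, hmeasS]
  have hPUne : ∀ i, P (U i) ≠ ⊤ := fun i => measure_ne_top _ _
  rw [ENNReal.toReal_add (measure_ne_top _ _) (ENNReal.sum_ne_top.mpr fun i _ => hPUne i),
    ENNReal.toReal_sum (fun i _ => hPUne i)]
  have h1 : (P T).toReal = ∏ j, ((n j : ℝ))⁻¹ := by
    rw [hPT, ENNReal.toReal_prod]
    exact Finset.prod_congr rfl fun j _ => hbtoReal j
  have h2 : ∀ i, (P (U i)).toReal
      = pEps μ ε (n i) * ∏ j ∈ Finset.univ.erase i, ((n j : ℝ))⁻¹ := by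
    intro i
    rw [hPU i, ENNReal.toReal_mul, ENNReal.toReal_prod,
      ENNReal.toReal_sub_of_le (hble i) (hcne i), ← hpEps i]
    congr 1
    exact Finset.prod_congr rfl fun j _ => hbtoReal j
  rw [h1, Finset.sum_congr rfl fun i _ => h2 i]
  -- pure algebra
  have hnpos : ∀ i, (0 : ℝ) < n i := by
    intro i
    exact_mod_cast lt_of_lt_of_le two_pos (hA i)
  have herase : ∀ i, ∏ j ∈ Finset.univ.erase i, ((n j : ℝ))⁻¹
      = (n i : ℝ) * ∏ j, ((n j : ℝ))⁻¹ := by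
    intro i
    rw [← Finset.mul_prod_erase Finset.univ (fun j => ((n j : ℝ))⁻¹) (Finset.mem_univ i),
      ← mul_assoc, mul_inv_cancel₀ (hnpos i).ne', one_mul]
  have hprodinv : (1 : ℝ) / ∏ j, (n j : ℝ) = ∏ j, ((n j : ℝ))⁻¹ := by
    rw [one_div, ← Finset.prod_inv_distrib]
  have hfinal : ∏ j, ((n j : ℝ))⁻¹
        + ∑ i, pEps μ ε (n i) * ∏ j ∈ Finset.univ.erase i, ((n j : ℝ))⁻¹
      = (1 / ∏ j, (n j : ℝ)) * (1 + ∑ i, (n i : ℝ) * pEps μ ε (n i)) := by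
    rw [hprodinv, Finset.sum_congr rfl fun i _ => by rw [herase i],
      mul_add, mul_one, Finset.mul_sum]
    congr 1
    exact Finset.sum_congr rfl fun i _ => by ring
  rw [hfinal]
end

section
/- Consider a game with agents N and action sets A_i, with all utilities i.i.d. with continuous CDF F. Then the expected number of pure ε-equilibria equals ∏_{i∈N} |A_i| q_i(ε), where q_i(ε) = ∫ F(x+ε)^{|A_i|−1} dF(x). -/
open MeasureTheory
open scoped Classical


lemma cdf_meas (μ : Measure ℝ) (ε : ℝ) (k : ℕ) :
    Measurable (fun t : ℝ => (μ (Set.Iic (t + ε))) ^ k) := by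
  have h : Monotone (fun t : ℝ => μ (Set.Iic (t + ε))) := by
    intro x y hxy
    exact measure_mono (Set.Iic_subset_Iic.2 (by linarith))
  exact (h.measurable).pow_const k

lemma cylinder (μ : Measure ℝ) [IsProbabilityMeasure μ] (ε : ℝ)
    {ι : Type} [Fintype ι] (b : ι) (s : Finset ι) (hb : b ∉ s) :
    (Measure.pi (fun _ : ι => μ)) {v : ι → ℝ | ∀ p ∈ s, v p ≤ v b + ε}
      = ∫⁻ t, (μ (Set.Iic (t + ε))) ^ s.card ∂μ := by
  classical
  set e := MeasurableEquiv.piEquivPiSubtypeProd (fun _ : ι => ℝ) (fun p => p = b) with he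
  have hmp := MeasureTheory.measurePreserving_piEquivPiSubtypeProd
      (fun _ : ι => μ) (fun p : ι => p = b)
  set T : Set ((∀ _ : {p : ι // p = b}, ℝ) × (∀ _ : {p : ι // ¬ p = b}, ℝ)) :=
    {q | ∀ p : {p : ι // ¬ p = b}, p.1 ∈ s → q.2 p ≤ q.1 ⟨b, rfl⟩ + ε} with hT
  have hTmeas : MeasurableSet T := by
    have : T = ⋂ (p : {p : ι // ¬ p = b}) (_ : p.1 ∈ s),
        {q : (∀ _ : {p : ι // p = b}, ℝ) × (∀ _ : {p : ι // ¬ p = b}, ℝ) |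
          q.2 p ≤ q.1 ⟨b, rfl⟩ + ε} := by
      ext q; simp [hT]
    rw [this]
    refine MeasurableSet.iInter fun p => MeasurableSet.iInter fun _ => ?_
    exact measurableSet_le (by fun_prop) (by fun_prop)
  have hpre : e ⁻¹' T = {v : ι → ℝ | ∀ p ∈ s, v p ≤ v b + ε} := by
    ext v
    simp only [Set.mem_preimage, Set.mem_setOf_eq, he,
      MeasurableEquiv.piEquivPiSubtypeProd, MeasurableEquiv.coe_mk,
      Equiv.piEquivPiSubtypeProd]
    constructor
    · intro h p hp
      exact h ⟨p, fun hpb => hb (hpb ▸ hp)⟩ hp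
    · intro h p hp
      exact h p.1 hp
  have key := hmp.measure_preimage hTmeas.nullMeasurableSet
  rw [hpre] at key
  rw [key, Measure.prod_apply hTmeas]
  have hslice : ∀ w : ∀ _ : {p : ι // p = b}, ℝ,
      (Measure.pi fun _ : {p : ι // ¬ p = b} => μ) (Prod.mk w ⁻¹' T)
        = (μ (Set.Iic (w ⟨b, rfl⟩ + ε))) ^ s.card := by
    intro w
    have hset : (Prod.mk w ⁻¹' T)
        = Set.pi Set.univ (fun p : {p : ι // ¬ p = b} =>
            if p.1 ∈ s then Set.Iic (w ⟨b, rfl⟩ + ε) else Set.univ) := by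
      ext w₂
      simp only [Set.mem_preimage, Set.mem_setOf_eq, hT, Set.mem_pi, Set.mem_univ, forall_true_left]
      constructor
      · intro h p
        by_cases hp : p.1 ∈ s <;> simp [hp, h p]
      · intro h p hp
        have := h p
        simpa [hp] using this
    rw [hset, Measure.pi_pi]
    have : ∀ p : {p : ι // ¬ p = b},
        μ (if p.1 ∈ s then Set.Iic (w ⟨b, rfl⟩ + ε) else Set.univ)
          = if p.1 ∈ s then μ (Set.Iic (w ⟨b, rfl⟩ + ε)) else 1 := by
      intro p; by_cases hp : p.1 ∈ s <;> simp [hp]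
    simp_rw [this]
    rw [Finset.prod_ite, Finset.prod_const, Finset.prod_const, one_pow, mul_one]
    congr 1
    refine Finset.card_bij (fun p _ => p.1) ?_ ?_ ?_
    · intro p hp; simpa using (Finset.mem_filter.1 hp).2
    · intro p hp q hq h; exact Subtype.ext h
    · intro p hp
      refine ⟨⟨p, fun h => hb (h ▸ hp)⟩, ?_, rfl⟩
      simp [hp]
  simp_rw [hslice]
  have hmpu := MeasureTheory.measurePreserving_funUnique (μ := μ) {p : ι // p = b}
  have : ∫⁻ w : ∀ _ : {p : ι // p = b}, ℝ, (μ (Set.Iic (w ⟨b, rfl⟩ + ε))) ^ s.card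
      ∂(Measure.pi fun _ : {p : ι // p = b} => μ)
      = ∫⁻ t, (μ (Set.Iic (t + ε))) ^ s.card ∂μ := by
    rw [← hmpu.lintegral_comp (cdf_meas μ ε s.card)]
    congr 1
  refine Eq.trans ?_ this
  congr!

lemma lint_toReal (μ : Measure ℝ) [IsProbabilityMeasure μ] (ε : ℝ) (k : ℕ) :
    (∫⁻ t, (μ (Set.Iic (t + ε))) ^ k ∂μ).toReal
      = ∫ t, ((μ (Set.Iic (t + ε))).toReal) ^ k ∂μ := by
  rw [← integral_toReal (cdf_meas μ ε k).aemeasurable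
    (ae_of_all _ fun t => lt_of_le_of_lt (pow_le_one' prob_le_one k) ENNReal.one_lt_top)]
  simp [ENNReal.toReal_pow]

/-- `q_i(ε) = ∫ F(x+ε)^(|A_i|−1) dF(x)` where `F x = μ (Iic x)`. -/
noncomputable def qEps (μ : Measure ℝ) (ε : ℝ) (card : ℕ) : ℝ :=
  ∫ x, ((μ (Set.Iic (x + ε))).toReal) ^ (card - 1) ∂μ

/-- With all utilities i.i.d. with continuous CDF, the expected number of pure
ε-equilibria equals `∏_i |A_i| q_i(ε)`. -/
theorem stmt_9 (μ : Measure ℝ) [IsProbabilityMeasure μ] [NullSingletonClass μ]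
    (ε : ℝ) (hε : 0 ≤ ε)
    (N : Type) [Fintype N] [DecidableEq N] [Nonempty N]
    (A : N → Type) [∀ i, Fintype (A i)] (hA : ∀ i, 2 ≤ Fintype.card (A i)) :
    ∫ u : N → (∀ j, A j) → ℝ,
      (∑ a : ∀ j, A j,
        if (∀ (i : N) (x : A i), u i (Function.update a i x) ≤ u i a + ε)
        then (1 : ℝ) else 0)
      ∂(Measure.pi (fun _ : N => Measure.pi (fun _ : ∀ j, A j => μ)))
      = ∏ i : N, (Fintype.card (A i) : ℝ) * qEps μ ε (Fintype.card (A i)) := by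
  classical
  set ν := Measure.pi (fun _ : ∀ j, A j => μ) with hν
  set Ν := Measure.pi (fun _ : N => ν) with hΝ
  -- measurability of the per-player sets
  have hSmeas : ∀ (a : ∀ j, A j) (i : N), MeasurableSet
      {v : (∀ j, A j) → ℝ | ∀ x : A i, v (Function.update a i x) ≤ v a + ε} := by
    intro a i
    have : {v : (∀ j, A j) → ℝ | ∀ x : A i, v (Function.update a i x) ≤ v a + ε}
        = ⋂ x : A i, {v | v (Function.update a i x) ≤ v a + ε} := by ext; simp
    rw [this]
    exact MeasurableSet.iInter fun x => measurableSet_le (by fun_prop) (by fun_prop)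
  have hEset : ∀ a : ∀ j, A j,
      {u : N → (∀ j, A j) → ℝ | ∀ (i : N) (x : A i),
          u i (Function.update a i x) ≤ u i a + ε}
        = Set.pi Set.univ (fun i : N =>
            {v : (∀ j, A j) → ℝ | ∀ x : A i, v (Function.update a i x) ≤ v a + ε}) := by
    intro a; ext u; simp [Set.mem_pi]
  have hEmeas : ∀ a : ∀ j, A j, MeasurableSet
      {u : N → (∀ j, A j) → ℝ | ∀ (i : N) (x : A i),
          u i (Function.update a i x) ≤ u i a + ε} := by
    intro a; rw [hEset a]; exact MeasurableSet.univ_pi fun i => hSmeas a i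
  -- per-player measure computation
  have hset : ∀ (a : ∀ j, A j) (i : N),
      (ν {v : (∀ j, A j) → ℝ | ∀ x : A i, v (Function.update a i x) ≤ v a + ε}).toReal
        = qEps μ ε (Fintype.card (A i)) := by
    intro a i
    have hinj : Function.Injective (fun x : A i => Function.update a i x) := by
      intro x y h
      have := congrFun h i
      simpa using this
    set s : Finset (∀ j, A j) :=
      (Finset.univ.image (fun x : A i => Function.update a i x)).erase a with hs
    have hamem : a ∈ Finset.univ.image (fun x : A i => Function.update a i x) := by
      refine Finset.mem_image.2 ⟨a i, Finset.mem_univ _, ?_⟩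
      exact Function.update_eq_self i a
    have hcard : s.card = Fintype.card (A i) - 1 := by
      rw [hs, Finset.card_erase_of_mem hamem,
        Finset.card_image_of_injective _ hinj, Finset.card_univ]
    have hanotmem : a ∉ s := Finset.notMem_erase a _
    have hseteq : {v : (∀ j, A j) → ℝ | ∀ x : A i, v (Function.update a i x) ≤ v a + ε}
        = {v : (∀ j, A j) → ℝ | ∀ p ∈ s, v p ≤ v a + ε} := by
      ext v
      simp only [Set.mem_setOf_eq]
      constructor
      · intro h p hp
        obtain ⟨x, -, rfl⟩ := Finset.mem_image.1 (Finset.mem_of_mem_erase hp)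
        exact h x
      · intro h x
        by_cases hx : Function.update a i x = a
        · rw [hx]; linarith
        · exact h _ (Finset.mem_erase.2 ⟨hx, Finset.mem_image.2 ⟨x, Finset.mem_univ _, rfl⟩⟩)
    rw [hseteq, hν, cylinder μ ε a s hanotmem, hcard, lint_toReal, qEps]
  -- swap sum and integral
  have hint : ∀ a : ∀ j, A j, Integrable
      (fun u : N → (∀ j, A j) → ℝ =>
        if (∀ (i : N) (x : A i), u i (Function.update a i x) ≤ u i a + ε)
        then (1 : ℝ) else 0) Ν := by
    intro a
    have : (fun u : N → (∀ j, A j) → ℝ =>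
        if (∀ (i : N) (x : A i), u i (Function.update a i x) ≤ u i a + ε)
        then (1 : ℝ) else 0)
      = Set.indicator {u : N → (∀ j, A j) → ℝ | ∀ (i : N) (x : A i),
          u i (Function.update a i x) ≤ u i a + ε} (fun _ => (1:ℝ)) := by
      ext u; simp [Set.indicator_apply]
    rw [this]
    exact (integrable_const 1).indicator (hEmeas a)
  rw [integral_finset_sum _ (fun a _ => hint a)]
  have hterm : ∀ a : ∀ j, A j,
      (∫ u, (if (∀ (i : N) (x : A i), u i (Function.update a i x) ≤ u i a + ε)
        then (1 : ℝ) else 0) ∂Ν)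
      = ∏ i : N, qEps μ ε (Fintype.card (A i)) := by
    intro a
    have h1 : (fun u : N → (∀ j, A j) → ℝ =>
        if (∀ (i : N) (x : A i), u i (Function.update a i x) ≤ u i a + ε)
        then (1 : ℝ) else 0)
      = Set.indicator {u : N → (∀ j, A j) → ℝ | ∀ (i : N) (x : A i),
          u i (Function.update a i x) ≤ u i a + ε} (fun _ => (1:ℝ)) := by
      ext u; simp [Set.indicator_apply]
    rw [h1, integral_indicator_const _ (hEmeas a), smul_eq_mul, mul_one, hEset a, hΝ,
      measureReal_def, Measure.pi_pi, ENNReal.toReal_prod]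
    exact Finset.prod_congr rfl fun i _ => hset a i
  simp_rw [hterm]
  rw [Finset.sum_const, Finset.card_univ, Fintype.card_pi, nsmul_eq_mul,
    Nat.cast_prod, ← Finset.prod_mul_distrib]
end

section
/- Consider a game with agents N, action sets A_i, and i.i.d. continuous utilities. Fix an agent i and two distinct action profiles a, a' differing only in agent i's action. Then the indicator events {a is a pure ε-equilibrium} and {a' is a pure ε-equilibrium} satisfy E[1_a · 1_{a'}] ≤ |A_i| · ∏_{j∈N} q_j(ε)^2, where q_j(ε) = ∫ F(x+ε)^{|A_j|−1} dF(x). -/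
open MeasureTheory

open scoped ENNReal
open Set Function

noncomputable def QLaux (μ : Measure ℝ) (ε : ℝ) (m : ℕ) : ℝ≥0∞ :=
  ∫⁻ x, (μ (Set.Iic (x + ε))) ^ m ∂μ

noncomputable def fPair {ι : Type*} (ε : ℝ) (s t : Finset ι) (c d : ι) (v : ι → ℝ) : ℝ≥0∞ :=
  (∏ p ∈ s, if v p ≤ v c + ε then 1 else 0) * ∏ p ∈ t, if v p ≤ v d + ε then 1 else 0

lemma measurable_F (μ : Measure ℝ) (ε : ℝ) : Measurable fun x : ℝ => μ (Set.Iic (x + ε)) := by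
  have : Monotone fun x : ℝ => μ (Set.Iic (x + ε)) := fun x y hxy =>
    measure_mono (Set.Iic_subset_Iic.2 (by linarith))
  exact this.measurable

lemma measurable_fPair {ι : Type*} [Fintype ι] (ε : ℝ) (s t : Finset ι) (c d : ι) :
    Measurable (fPair ε s t c d) := by
  refine Measurable.mul ?_ ?_
  · refine Finset.measurable_prod _ fun p _ => ?_
    refine Measurable.ite ?_ measurable_const measurable_const
    exact measurableSet_le (measurable_pi_apply p) (by fun_prop)
  · refine Finset.measurable_prod _ fun p _ => ?_
    refine Measurable.ite ?_ measurable_const measurable_const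
    exact measurableSet_le (measurable_pi_apply p) (by fun_prop)

theorem core {ι : Type*} [Fintype ι] [DecidableEq ι]
    (μ : Measure ℝ) [IsProbabilityMeasure μ] (ε : ℝ)
    (s t : Finset ι) (c d : ι) (T : Finset ι) (hsT : s ⊆ T) (htT : t ⊆ T)
    (hcT : c ∉ T) (hdT : d ∉ T) (hst : Disjoint s t) (x : ι → ℝ) :
    (∫⋯∫⁻_T, fPair ε s t c d ∂fun _ => μ) x
      = (μ (Set.Iic (x c + ε))) ^ s.card * (μ (Set.Iic (x d + ε))) ^ t.card := by
  classical
  set B : ι → Set ℝ := fun p =>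
    if p ∈ s then Set.Iic (x c + ε) else if p ∈ t then Set.Iic (x d + ε) else Set.univ with hB
  have hBmeas : ∀ p, MeasurableSet (B p) := by
    intro p
    simp only [hB]
    split_ifs <;> measurability
  have key : ∀ y : (p : T) → ℝ,
      fPair ε s t c d (updateFinset x T y) = (Set.univ.pi fun p : T => B p).indicator 1 y := by
    intro y
    have hupd : ∀ p (hp : p ∈ T), updateFinset x T y p = y ⟨p, hp⟩ := by
      intro p hp; simp [updateFinset, hp]
    have hupd' : ∀ p, p ∉ T → updateFinset x T y p = x p := by
      intro p hp; simp [updateFinset, hp]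
    by_cases hy : y ∈ Set.univ.pi fun p : T => B p
    · rw [Set.indicator_of_mem hy]
      have h1 : ∀ p ∈ s, (if updateFinset x T y p ≤ updateFinset x T y c + ε then (1:ℝ≥0∞) else 0) = 1 := by
        intro p hp
        have hpB := hy ⟨p, hsT hp⟩ (Set.mem_univ _)
        rw [hB] at hpB; simp only [if_pos hp, Set.mem_Iic] at hpB
        rw [hupd p (hsT hp), hupd' c hcT, if_pos hpB]
      have h2 : ∀ p ∈ t, (if updateFinset x T y p ≤ updateFinset x T y d + ε then (1:ℝ≥0∞) else 0) = 1 := by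
        intro p hp
        have hps : p ∉ s := Finset.disjoint_right.1 hst hp
        have hpB := hy ⟨p, htT hp⟩ (Set.mem_univ _)
        rw [hB] at hpB; simp only [if_neg hps, if_pos hp, Set.mem_Iic] at hpB
        rw [hupd p (htT hp), hupd' d hdT, if_pos hpB]
      simp only [fPair, Finset.prod_congr rfl h1, Finset.prod_congr rfl h2,
        Finset.prod_const_one, one_mul, Pi.one_apply]
    · rw [Set.indicator_of_notMem hy]
      simp only [Set.mem_pi, Set.mem_univ, forall_true_left, not_forall] at hy
      obtain ⟨⟨p, hpT⟩, hpB⟩ := hy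
      rw [hB] at hpB
      by_cases hps : p ∈ s
      · simp only [if_pos hps, Set.mem_Iic] at hpB
        refine mul_eq_zero.2 (Or.inl (Finset.prod_eq_zero hps ?_))
        rw [hupd p hpT, hupd' c hcT, if_neg hpB]
      · by_cases hpt : p ∈ t
        · simp only [if_neg hps, if_pos hpt, Set.mem_Iic] at hpB
          refine mul_eq_zero.2 (Or.inr (Finset.prod_eq_zero hpt ?_))
          rw [hupd p hpT, hupd' d hdT, if_neg hpB]
        · simp [if_neg hps, if_neg hpt] at hpB
  rw [lmarginal]
  simp_rw [key]
  rw [lintegral_indicator_one (MeasurableSet.univ_pi fun p : T => hBmeas (p : ι)),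
    Measure.pi_pi]
  have : ∀ p : T, μ (B p) = (fun q => μ (B q)) (p : ι) := fun p => rfl
  rw [Finset.prod_congr rfl (fun p _ => this p)]
  rw [Finset.prod_coe_sort T (fun q => μ (B q))]
  have hsub : s ∪ t ⊆ T := Finset.union_subset hsT htT
  rw [← Finset.prod_subset hsub (by
    intro p hpT hpst
    have hps : p ∉ s := fun h => hpst (Finset.mem_union_left _ h)
    have hpt : p ∉ t := fun h => hpst (Finset.mem_union_right _ h)
    simp [hB, hps, hpt])]
  rw [Finset.prod_union hst]
  congr 1
  · calc ∏ p ∈ s, μ (B p) = ∏ _p ∈ s, μ (Set.Iic (x c + ε)) :=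
        Finset.prod_congr rfl (fun p hp => by simp [hB, hp])
      _ = μ (Set.Iic (x c + ε)) ^ s.card := Finset.prod_const _
  · calc ∏ p ∈ t, μ (B p) = ∏ _p ∈ t, μ (Set.Iic (x d + ε)) :=
        Finset.prod_congr rfl (fun p hp => by
          have hps : p ∉ s := Finset.disjoint_right.1 hst hp
          simp [hB, hps, hp])
      _ = μ (Set.Iic (x d + ε)) ^ t.card := Finset.prod_const _

lemma measurableSet_star {ι : Type*} [Fintype ι] (ε : ℝ) (s : Finset ι) (c : ι) :
    MeasurableSet {v : ι → ℝ | ∀ p ∈ s, v p ≤ v c + ε} := by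
  have : {v : ι → ℝ | ∀ p ∈ s, v p ≤ v c + ε} = ⋂ p ∈ s, {v : ι → ℝ | v p ≤ v c + ε} := by
    ext v; simp
  rw [this]
  exact MeasurableSet.biInter s.countable_toSet fun p _ =>
    measurableSet_le (measurable_pi_apply p) (by fun_prop)

lemma indicator_pair {ι : Type*} (ε : ℝ) (s t : Finset ι) (c d : ι) (v : ι → ℝ) :
    ({v : ι → ℝ | (∀ p ∈ s, v p ≤ v c + ε) ∧ (∀ p ∈ t, v p ≤ v d + ε)}).indicator 1 v
      = fPair ε s t c d v := by
  by_cases hv : v ∈ {v : ι → ℝ | (∀ p ∈ s, v p ≤ v c + ε) ∧ (∀ p ∈ t, v p ≤ v d + ε)}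
  · rw [Set.indicator_of_mem hv]
    obtain ⟨h1, h2⟩ := hv
    simp only [fPair, Pi.one_apply]
    rw [Finset.prod_congr rfl (fun p hp => if_pos (h1 p hp)),
      Finset.prod_congr rfl (fun p hp => if_pos (h2 p hp))]
    simp
  · rw [Set.indicator_of_notMem hv]
    simp only [Set.mem_setOf_eq, not_and_or, not_forall] at hv
    unfold fPair
    rcases hv with ⟨p, hp, hpv⟩ | ⟨p, hp, hpv⟩
    · rw [Finset.prod_eq_zero hp
        (if_neg hpv : (if v p ≤ v c + ε then (1:ℝ≥0∞) else 0) = 0), zero_mul]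
    · rw [Finset.prod_eq_zero hp
        (if_neg hpv : (if v p ≤ v d + ε then (1:ℝ≥0∞) else 0) = 0), mul_zero]

lemma measure_single {ι : Type*} [Fintype ι] [DecidableEq ι]
    (μ : Measure ℝ) [IsProbabilityMeasure μ] (ε : ℝ) (s : Finset ι) (c : ι) (hcs : c ∉ s) :
    (Measure.pi fun _ : ι => μ) {v : ι → ℝ | ∀ p ∈ s, v p ≤ v c + ε}
      = QLaux μ ε s.card := by
  have hf : Measurable (fPair ε s (∅ : Finset ι) c c) := measurable_fPair ε s ∅ c c
  have hEeq : {v : ι → ℝ | ∀ p ∈ s, v p ≤ v c + ε}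
      = {v : ι → ℝ | (∀ p ∈ s, v p ≤ v c + ε) ∧ (∀ p ∈ (∅ : Finset ι), v p ≤ v c + ε)} := by
    ext v; simp
  rw [hEeq, ← lintegral_indicator_one (by
    rw [← hEeq]; exact measurableSet_star ε s c)]
  simp_rw [indicator_pair ε s (∅ : Finset ι) c c]
  rw [lintegral_eq_lmarginal_univ (fun _ => (0:ℝ))]
  rw [show (Finset.univ : Finset ι) = insert c (Finset.univ.erase c) from
    (Finset.insert_erase (Finset.mem_univ c)).symm]
  rw [lmarginal_insert _ hf (Finset.notMem_erase c Finset.univ)]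
  have hcore : ∀ y : ℝ,
      (∫⋯∫⁻_Finset.univ.erase c, fPair ε s ∅ c c ∂fun _ => μ)
        (Function.update (fun _ => (0:ℝ)) c y)
      = (μ (Set.Iic (y + ε))) ^ s.card := by
    intro y
    rw [core μ ε s ∅ c c (Finset.univ.erase c)
      (fun p hp => Finset.mem_erase.2 ⟨fun h => hcs (h ▸ hp), Finset.mem_univ p⟩)
      (Finset.empty_subset _) (Finset.notMem_erase c Finset.univ)
      (Finset.notMem_erase c Finset.univ) (Finset.disjoint_empty_right s)]
    simp [Function.update_self]
  simp_rw [hcore]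
  rfl

lemma measure_pair {ι : Type*} [Fintype ι] [DecidableEq ι]
    (μ : Measure ℝ) [IsProbabilityMeasure μ] (ε : ℝ) (s t : Finset ι) (c d : ι)
    (hcs : c ∉ s) (hct : c ∉ t) (hds : d ∉ s) (hdt : d ∉ t) (hcd : c ≠ d)
    (hst : Disjoint s t) :
    (Measure.pi fun _ : ι => μ)
      {v : ι → ℝ | (∀ p ∈ s, v p ≤ v c + ε) ∧ (∀ p ∈ t, v p ≤ v d + ε)}
      = QLaux μ ε s.card * QLaux μ ε t.card := by
  have hf : Measurable (fPair ε s t c d) := measurable_fPair ε s t c d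
  have hEmeas : MeasurableSet
      {v : ι → ℝ | (∀ p ∈ s, v p ≤ v c + ε) ∧ (∀ p ∈ t, v p ≤ v d + ε)} :=
    (measurableSet_star ε s c).inter (measurableSet_star ε t d)
  rw [← lintegral_indicator_one hEmeas]
  simp_rw [indicator_pair ε s t c d]
  rw [lintegral_eq_lmarginal_univ (fun _ => (0:ℝ))]
  set R : Finset ι := (Finset.univ.erase c).erase d with hR
  have hdR : d ∉ R := Finset.notMem_erase d _
  have hcR : c ∉ R := fun h => Finset.notMem_erase c Finset.univ (Finset.mem_of_mem_erase h)
  have huniv : (Finset.univ : Finset ι) = insert c (insert d R) := by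
    rw [hR, Finset.insert_erase (Finset.mem_erase.2 ⟨Ne.symm hcd, Finset.mem_univ d⟩),
      Finset.insert_erase (Finset.mem_univ c)]
  have hcins : c ∉ insert d R := by
    simp only [Finset.mem_insert]
    rintro (h | h)
    · exact hcd h
    · exact hcR h
  rw [huniv, lmarginal_insert _ hf hcins]
  have hsR : s ⊆ R := fun p hp => Finset.mem_erase.2 ⟨fun h => hds (h ▸ hp),
    Finset.mem_erase.2 ⟨fun h => hcs (h ▸ hp), Finset.mem_univ p⟩⟩
  have htR : t ⊆ R := fun p hp => Finset.mem_erase.2 ⟨fun h => hdt (h ▸ hp),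
    Finset.mem_erase.2 ⟨fun h => hct (h ▸ hp), Finset.mem_univ p⟩⟩
  have hstep : ∀ y : ℝ,
      (∫⋯∫⁻_insert d R, fPair ε s t c d ∂fun _ => μ)
        (Function.update (fun _ => (0:ℝ)) c y)
      = (μ (Set.Iic (y + ε))) ^ s.card * QLaux μ ε t.card := by
    intro y
    rw [lmarginal_insert _ hf hdR]
    have hcore : ∀ y' : ℝ,
        (∫⋯∫⁻_R, fPair ε s t c d ∂fun _ => μ)
          (Function.update (Function.update (fun _ => (0:ℝ)) c y) d y')
        = (μ (Set.Iic (y + ε))) ^ s.card * (μ (Set.Iic (y' + ε))) ^ t.card := by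
      intro y'
      rw [core μ ε s t c d R hsR htR hcR hdR hst]
      rw [Function.update_of_ne hcd, Function.update_self, Function.update_self]
    simp_rw [hcore]
    rw [lintegral_const_mul _ ((measurable_F μ ε).pow_const t.card)]
    rfl
  simp_rw [hstep]
  rw [lintegral_mul_const _ ((measurable_F μ ε).pow_const s.card)]
  rfl

lemma QLaux_le_one (μ : Measure ℝ) [IsProbabilityMeasure μ] (ε : ℝ) (m : ℕ) :
    QLaux μ ε m ≤ 1 := by
  calc QLaux μ ε m ≤ ∫⁻ _, 1 ∂μ := lintegral_mono fun x => pow_le_one' prob_le_one m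
    _ = 1 := by simp

lemma QLaux_ne_top (μ : Measure ℝ) [IsProbabilityMeasure μ] (ε : ℝ) (m : ℕ) :
    QLaux μ ε m ≠ ⊤ :=
  (lt_of_le_of_lt (QLaux_le_one μ ε m) ENNReal.one_lt_top).ne

lemma QLaux_mono (μ : Measure ℝ) {ε : ℝ} (hε : 0 ≤ ε) (m : ℕ) :
    QLaux μ 0 m ≤ QLaux μ ε m :=
  lintegral_mono fun x =>
    pow_le_pow_left' (measure_mono (Set.Iic_subset_Iic.2 (by linarith))) m

lemma qEps_eq (μ : Measure ℝ) [IsProbabilityMeasure μ] (ε : ℝ) (k : ℕ) :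
    qEps μ ε k = (QLaux μ ε (k - 1)).toReal := by
  rw [qEps, QLaux, ← integral_toReal ((measurable_F μ ε).pow_const (k-1)).aemeasurable
    (ae_of_all _ fun x => lt_of_le_of_lt (pow_le_one' prob_le_one _) ENNReal.one_lt_top)]
  congr 1
  funext x
  rw [ENNReal.toReal_pow]

lemma one_le_card_mul_QLaux (μ : Measure ℝ) [IsProbabilityMeasure μ]
    (ι : Type*) [Fintype ι] [DecidableEq ι] [Nonempty ι] :
    (1:ℝ≥0∞) ≤ (Fintype.card ι : ℝ≥0∞) * QLaux μ 0 (Fintype.card ι - 1) := by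
  have hcover : (Set.univ : Set (ι → ℝ)) ⊆
      ⋃ c : ι, {v : ι → ℝ | ∀ p ∈ Finset.univ.erase c, v p ≤ v c + 0} := by
    intro v _
    obtain ⟨c, hc⟩ := Finite.exists_max v
    exact Set.mem_iUnion.2 ⟨c, fun p _ => by simpa using hc p⟩
  calc (1:ℝ≥0∞) = (Measure.pi fun _ : ι => μ) Set.univ := by simp
    _ ≤ (Measure.pi fun _ : ι => μ)
        (⋃ c : ι, {v : ι → ℝ | ∀ p ∈ Finset.univ.erase c, v p ≤ v c + 0}) :=
      measure_mono hcover
    _ ≤ ∑' c : ι, (Measure.pi fun _ : ι => μ)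
        {v : ι → ℝ | ∀ p ∈ Finset.univ.erase c, v p ≤ v c + 0} :=
      measure_iUnion_le _
    _ = ∑ c : ι, QLaux μ 0 (Fintype.card ι - 1) := by
      rw [tsum_fintype]
      refine Finset.sum_congr rfl fun c _ => ?_
      rw [measure_single μ 0 (Finset.univ.erase c) c (Finset.notMem_erase c _),
        Finset.card_erase_of_mem (Finset.mem_univ c), Finset.card_univ]
    _ = (Fintype.card ι : ℝ≥0∞) * QLaux μ 0 (Fintype.card ι - 1) := by
      rw [Finset.sum_const, Finset.card_univ, nsmul_eq_mul]

/-- For two distinct action profiles `a` and `a' = (b, a_{−i})` differing only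
in agent `i`'s action, the probability that both are pure ε-equilibria is at
most `|A_i| · ∏_j q_j(ε)^2`. -/
theorem stmt_16 (μ : Measure ℝ) [IsProbabilityMeasure μ] [NullSingletonClass μ]
    (ε : ℝ) (hε : 0 ≤ ε)
    (N : Type) [Fintype N] [DecidableEq N] [Nonempty N]
    (A : N → Type) [∀ i, Fintype (A i)] (hA : ∀ j, 2 ≤ Fintype.card (A j))
    (a : ∀ j, A j) (i : N) (b : A i) (hb : b ≠ a i) :
    ((Measure.pi (fun _ : N => Measure.pi (fun _ : ∀ j, A j => μ)))
      ({u : N → (∀ j, A j) → ℝ |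
          ∀ (j : N) (x : A j), u j (Function.update a j x) ≤ u j a + ε} ∩
       {u : N → (∀ j, A j) → ℝ |
          ∀ (j : N) (x : A j),
            u j (Function.update (Function.update a i b) j x)
              ≤ u j (Function.update a i b) + ε})).toReal
      ≤ (Fintype.card (A i) : ℝ) * ∏ j : N, (qEps μ ε (Fintype.card (A j))) ^ 2 := by

  classical
  set a' := Function.update a i b with ha'
  set ν := Measure.pi (fun _ : ∀ j, A j => μ) with hν
  set S : ∀ _ : N, Set ((∀ j, A j) → ℝ) := fun j =>
    {v | (∀ x : A j, v (Function.update a j x) ≤ v a + ε) ∧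
         (∀ x : A j, v (Function.update a' j x) ≤ v a' + ε)} with hS
  have hsplit : ({u : N → (∀ j, A j) → ℝ |
          ∀ (j : N) (x : A j), u j (Function.update a j x) ≤ u j a + ε} ∩
       {u : N → (∀ j, A j) → ℝ |
          ∀ (j : N) (x : A j),
            u j (Function.update a' j x) ≤ u j a' + ε}) = Set.pi Set.univ S := by
    ext u
    simp only [Set.mem_inter_iff, Set.mem_setOf_eq, Set.mem_pi, Set.mem_univ,
      forall_true_left, hS]
    constructor
    · rintro ⟨h1, h2⟩ j; exact ⟨h1 j, h2 j⟩
    · intro h; exact ⟨fun j => (h j).1, fun j => (h j).2⟩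
  rw [hsplit, Measure.pi_pi, ENNReal.toReal_prod]
  -- basic facts about a and a'
  have ha'i : a' i = b := Function.update_self i b a
  have ha'j : ∀ j, j ≠ i → a' j = a j := fun j hj => Function.update_of_ne hj b a
  have haa' : a ≠ a' := fun h => hb (by rw [h, ha'i])
  -- the Finsets of comparison profiles
  set sF : ∀ j : N, Finset (∀ j, A j) := fun j =>
    (Finset.univ.erase (a j)).image (fun x => Function.update a j x) with hsF
  set tF : ∀ j : N, Finset (∀ j, A j) := fun j =>
    (Finset.univ.erase (a' j)).image (fun x => Function.update a' j x) with htF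
  have hinj : ∀ (w : ∀ j, A j) (j : N), Function.Injective (fun x => Function.update w j x) :=
    fun w j x y h => by simpa using congrFun h j
  have hcard_s : ∀ j, (sF j).card = Fintype.card (A j) - 1 := by
    intro j
    rw [hsF, Finset.card_image_of_injective _ (hinj a j),
      Finset.card_erase_of_mem (Finset.mem_univ _), Finset.card_univ]
  have hcard_t : ∀ j, (tF j).card = Fintype.card (A j) - 1 := by
    intro j
    rw [htF, Finset.card_image_of_injective _ (hinj a' j),
      Finset.card_erase_of_mem (Finset.mem_univ _), Finset.card_univ]
  -- bound for j ≠ i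
  have hbound : ∀ j, j ≠ i → ν (S j) ≤
      QLaux μ ε (Fintype.card (A j) - 1) * QLaux μ ε (Fintype.card (A j) - 1) := by
    intro j hji
    have hsub : S j ⊆ {v : (∀ j, A j) → ℝ |
        (∀ p ∈ sF j, v p ≤ v a + ε) ∧ (∀ p ∈ tF j, v p ≤ v a' + ε)} := by
      rintro v ⟨h1, h2⟩
      constructor
      · intro p hp
        obtain ⟨x, _, rfl⟩ := Finset.mem_image.1 hp
        exact h1 x
      · intro p hp
        obtain ⟨x, _, rfl⟩ := Finset.mem_image.1 hp
        exact h2 x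
    have has : a ∉ sF j := by
      intro h
      obtain ⟨x, hx, hxa⟩ := Finset.mem_image.1 h
      exact Finset.ne_of_mem_erase hx (by simpa using congrFun hxa j)
    have hat : a ∉ tF j := by
      intro h
      obtain ⟨x, _, hxa⟩ := Finset.mem_image.1 h
      have := congrFun hxa i
      rw [Function.update_of_ne (Ne.symm hji), ha'i] at this
      exact hb this
    have ha's : a' ∉ sF j := by
      intro h
      obtain ⟨x, _, hxa⟩ := Finset.mem_image.1 h
      have := congrFun hxa i
      rw [Function.update_of_ne (Ne.symm hji), ha'i] at this
      exact hb this.symm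
    have ha't : a' ∉ tF j := by
      intro h
      obtain ⟨x, hx, hxa⟩ := Finset.mem_image.1 h
      exact Finset.ne_of_mem_erase hx (by simpa using congrFun hxa j)
    have hdisj : Disjoint (sF j) (tF j) := by
      rw [Finset.disjoint_left]
      intro p hps hpt
      obtain ⟨x, _, rfl⟩ := Finset.mem_image.1 hps
      obtain ⟨y, _, hy⟩ := Finset.mem_image.1 hpt
      have := congrFun hy i
      rw [Function.update_of_ne (Ne.symm hji), Function.update_of_ne (Ne.symm hji),
        ha'i] at this
      exact hb this
    calc ν (S j) ≤ ν {v : (∀ j, A j) → ℝ |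
        (∀ p ∈ sF j, v p ≤ v a + ε) ∧ (∀ p ∈ tF j, v p ≤ v a' + ε)} :=
          measure_mono hsub
      _ = QLaux μ ε (sF j).card * QLaux μ ε (tF j).card :=
          measure_pair μ ε (sF j) (tF j) a a' has hat ha's ha't haa' hdisj
      _ = _ := by rw [hcard_s, hcard_t]
  -- bound for j = i
  have hboundi : ν (S i) ≤ QLaux μ ε (Fintype.card (A i) - 1) := by
    have hsub : S i ⊆ {v : (∀ j, A j) → ℝ | ∀ p ∈ sF i, v p ≤ v a + ε} := by
      rintro v ⟨h1, _⟩ p hp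
      obtain ⟨x, _, rfl⟩ := Finset.mem_image.1 hp
      exact h1 x
    have has : a ∉ sF i := by
      intro h
      obtain ⟨x, hx, hxa⟩ := Finset.mem_image.1 h
      exact Finset.ne_of_mem_erase hx (by simpa using congrFun hxa i)
    calc ν (S i) ≤ ν {v : (∀ j, A j) → ℝ | ∀ p ∈ sF i, v p ≤ v a + ε} :=
          measure_mono hsub
      _ = QLaux μ ε (sF i).card := measure_single μ ε (sF i) a has
      _ = _ := by rw [hcard_s]
  -- pass to reals
  have hq : ∀ j, qEps μ ε (Fintype.card (A j)) = (QLaux μ ε (Fintype.card (A j) - 1)).toReal :=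
    fun j => qEps_eq μ ε _
  have hqnonneg : ∀ j, 0 ≤ qEps μ ε (Fintype.card (A j)) := fun j =>
    (hq j) ▸ ENNReal.toReal_nonneg
  have h_one_le : (1:ℝ) ≤ (Fintype.card (A i) : ℝ) * qEps μ ε (Fintype.card (A i)) := by
    haveI : Nonempty (A i) := Fintype.card_pos_iff.1 (by have := hA i; omega : 0 < Fintype.card (A i))
    have h1 : (1:ℝ≥0∞) ≤ (Fintype.card (A i) : ℝ≥0∞) * QLaux μ ε (Fintype.card (A i) - 1) :=
      le_trans (one_le_card_mul_QLaux μ (A i))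
        (mul_le_mul_right (QLaux_mono μ hε _) _)
    have h2 := ENNReal.toReal_mono
      (ENNReal.mul_ne_top (ENNReal.natCast_ne_top _) (QLaux_ne_top μ ε _)) h1
    rw [ENNReal.toReal_mul, ENNReal.toReal_one, ENNReal.toReal_natCast] at h2
    rw [hq i]
    exact h2
  have hfact : ∀ j : N, (ν (S j)).toReal ≤
      (if j = i then (Fintype.card (A i) : ℝ) else 1) * qEps μ ε (Fintype.card (A j)) ^ 2 := by
    intro j
    by_cases hji : j = i
    · subst hji
      rw [if_pos rfl]
      have h1 : (ν (S j)).toReal ≤ qEps μ ε (Fintype.card (A j)) := by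
        rw [hq j]
        exact ENNReal.toReal_mono (QLaux_ne_top μ ε _) hboundi
      calc (ν (S j)).toReal ≤ qEps μ ε (Fintype.card (A j)) := h1
        _ = 1 * qEps μ ε (Fintype.card (A j)) := (one_mul _).symm
        _ ≤ ((Fintype.card (A j) : ℝ) * qEps μ ε (Fintype.card (A j))) *
              qEps μ ε (Fintype.card (A j)) :=
            mul_le_mul_of_nonneg_right h_one_le (hqnonneg j)
        _ = (Fintype.card (A j) : ℝ) * qEps μ ε (Fintype.card (A j)) ^ 2 := by ring
    · rw [if_neg hji, one_mul]
      have h1 := ENNReal.toReal_mono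
        (ENNReal.mul_ne_top (QLaux_ne_top μ ε _) (QLaux_ne_top μ ε _)) (hbound j hji)
      rw [ENNReal.toReal_mul] at h1
      calc (ν (S j)).toReal ≤ (QLaux μ ε (Fintype.card (A j) - 1)).toReal *
            (QLaux μ ε (Fintype.card (A j) - 1)).toReal := h1
        _ = qEps μ ε (Fintype.card (A j)) ^ 2 := by rw [hq j]; ring
  calc ∏ j : N, (ν (S j)).toReal
      ≤ ∏ j : N, ((if j = i then (Fintype.card (A i) : ℝ) else 1) *
          qEps μ ε (Fintype.card (A j)) ^ 2) :=
        Finset.prod_le_prod (fun j _ => ENNReal.toReal_nonneg) (fun j _ => hfact j)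
    _ = (∏ j : N, (if j = i then (Fintype.card (A i) : ℝ) else 1)) *
          ∏ j : N, qEps μ ε (Fintype.card (A j)) ^ 2 := Finset.prod_mul_distrib
    _ = (Fintype.card (A i) : ℝ) * ∏ j : N, qEps μ ε (Fintype.card (A j)) ^ 2 := by
        rw [Finset.prod_ite_eq' Finset.univ i (fun _ => (Fintype.card (A i) : ℝ)),
          if_pos (Finset.mem_univ i)]
end
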